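/- Consider the time-varying MPC setup: fix real matrices A (n×n), B (n×m), a horizon T ≥ 1, a real δ ∈ [0,1), and sequences (Q_t)_{t∈ℕ} of symmetric positive definite n×n matrices and (R_t)_{t∈ℕ} of symmetric positive definite m×m matrices satisfying (1−δ)Q_t ⪯ Q_{t+1} ⪯ (1+δ)Q_t and (1−δ)R_t ⪯ R_{t+1} ⪯ (1+δ)R_t for all t. For weights (Q,R) let P_k(Q,R) be the Riccati iterates with P_0 = 0 and P_{k+1} = AᵀP_kA − AᵀP_kB(BᵀP_kB+R)⁻¹BᵀP_kA + Q, and let the MPC closed-loop trajectory from x_0 be x_{t+1} = Ax_t + Bû_t with û_t = −(BᵀP_{T−1}(Q_t,R_t)B+R_t)⁻¹BᵀP_{T−1}(Q_t,R_t)A x_t. Suppose ρ ∈ (0,1) satisfies ρ·P_T(Q_t,R_t) ⪯ Q_t for all t, α > 1 satisfies P_T(Q_t,R_t) ⪯ α·P_{T−1}(Q_t,R_t) for all t, and that γ = (1−ρ)α/(1−δ) < 1. Then for every control sequence (u_t)_{t∈ℕ} in ℝᵐ with trajectory z_{t+1} = Az_t + Bu_t, z_0 = x_0, whose total cost series ∑_{t=0}^{∞}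 (z_tᵀQ_tz_t + u_tᵀR_tu_t) converges to a value S, the total realized MPC cost satisfies ∑_{t=0}^{∞} (x_tᵀQ_tx_t + û_tᵀR_tû_t) ≤ (ρ(1−δ)^{1−T}/(1−γ)) · S. In particular, the MPC policy is (1+ε_T)-suboptimal with 1+ε_T = ρ(1−δ)^{1−T}/(1−γ). -/

import Mathlib

open Matrix

/-- The finite-horizon Riccati iteration with `P 0 = 0` and
`P (k+1) = AᵀP_kA − AᵀP_kB(BᵀP_kB+R)⁻¹BᵀP_kA + Q`. -/
noncomputable def riccati {n m : ℕ} (A : Matrix (Fin n) (Fin n) ℝ)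
    (B : Matrix (Fin n) (Fin m) ℝ) (Q : Matrix (Fin n) (Fin n) ℝ)
    (R : Matrix (Fin m) (Fin m) ℝ) : ℕ → Matrix (Fin n) (Fin n) ℝ
  | 0 => 0
  | k + 1 =>
      Aᵀ * riccati A B Q R k * A -
        Aᵀ * riccati A B Q R k * B * (Bᵀ * riccati A B Q R k * B + R)⁻¹ *
          Bᵀ * riccati A B Q R k * A + Q

/-- The Loewner order on real square matrices: `X ⪯ Y` iff `Y − X` is positive semidefinite. -/
def loewnerLE {n : ℕ} (X Y : Matrix (Fin n) (Fin n) ℝ) : Prop := (Y - X).PosSemidef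

namespace MPCAux

lemma dotT {a b : ℕ} (M : Matrix (Fin a) (Fin b) ℝ) (v : Fin a → ℝ) (w : Fin b → ℝ) :
    v ⬝ᵥ (M *ᵥ w) = (Mᵀ *ᵥ v) ⬝ᵥ w := by
  rw [Matrix.dotProduct_mulVec, Matrix.mulVec_transpose]

lemma dotT' {a b : ℕ} (M : Matrix (Fin a) (Fin b) ℝ) (v : Fin b → ℝ) (w : Fin a → ℝ) :
    v ⬝ᵥ (Mᵀ *ᵥ w) = (M *ᵥ v) ⬝ᵥ w := by
  rw [dotT, Matrix.transpose_transpose]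

lemma symdot {a : ℕ} {P : Matrix (Fin a) (Fin a) ℝ} (hP : Pᵀ = P) (v w : Fin a → ℝ) :
    v ⬝ᵥ (P *ᵥ w) = w ⬝ᵥ (P *ᵥ v) := by
  rw [dotT, hP, dotProduct_comm]

lemma psd_nonneg {a : ℕ} {P : Matrix (Fin a) (Fin a) ℝ} (hP : P.PosSemidef) (v : Fin a → ℝ) :
    0 ≤ v ⬝ᵥ (P *ᵥ v) := by simpa using hP.dotProduct_mulVec_nonneg v

lemma psd_transpose_eq {a : ℕ} {P : Matrix (Fin a) (Fin a) ℝ} (hP : P.IsHermitian) : Pᵀ = P := by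
  rw [← Matrix.conjTranspose_eq_transpose_of_trivial]; exact hP

lemma btpb_psd {n m : ℕ} (B : Matrix (Fin n) (Fin m) ℝ) {P : Matrix (Fin n) (Fin n) ℝ}
    (hP : P.PosSemidef) : (Bᵀ * P * B).PosSemidef := by
  have := hP.conjTranspose_mul_mul_same B
  rwa [Matrix.conjTranspose_eq_transpose_of_trivial] at this

lemma M_posdef {n m : ℕ} (B : Matrix (Fin n) (Fin m) ℝ) {P : Matrix (Fin n) (Fin n) ℝ}
    {R : Matrix (Fin m) (Fin m) ℝ} (hP : P.PosSemidef) (hR : R.PosDef) :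
    (Bᵀ * P * B + R).PosDef :=
  Matrix.PosDef.posSemidef_add (btpb_psd B hP) hR

/-- Completion of squares identity for one Riccati step. -/
lemma completion {n m : ℕ} (A : Matrix (Fin n) (Fin n) ℝ) (B : Matrix (Fin n) (Fin m) ℝ)
    (P Q : Matrix (Fin n) (Fin n) ℝ) (R : Matrix (Fin m) (Fin m) ℝ)
    (hP : P.PosSemidef) (hR : R.PosDef) (x : Fin n → ℝ) (u : Fin m → ℝ) :
    x ⬝ᵥ (Q *ᵥ x) + u ⬝ᵥ (R *ᵥ u) + (A *ᵥ x + B *ᵥ u) ⬝ᵥ (P *ᵥ (A *ᵥ x + B *ᵥ u))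
    = x ⬝ᵥ ((Aᵀ * P * A - Aᵀ * P * B * (Bᵀ * P * B + R)⁻¹ * Bᵀ * P * A + Q) *ᵥ x)
      + (u + ((Bᵀ * P * B + R)⁻¹ * Bᵀ * P * A) *ᵥ x) ⬝ᵥ
          ((Bᵀ * P * B + R) *ᵥ (u + ((Bᵀ * P * B + R)⁻¹ * Bᵀ * P * A) *ᵥ x)) := by
  have hPt : Pᵀ = P := psd_transpose_eq hP.isHermitian
  have hM : (Bᵀ * P * B + R).PosDef := M_posdef B hP hR
  set M : Matrix (Fin m) (Fin m) ℝ := Bᵀ * P * B + R with hMdef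
  have hMt : Mᵀ = M := psd_transpose_eq hM.isHermitian
  have hMdet : IsUnit M.det := (Matrix.isUnit_iff_isUnit_det M).1 hM.isUnit
  have hMM : M * M⁻¹ = 1 := Matrix.mul_nonsing_inv _ hMdet
  -- atoms
  set a : Fin n → ℝ := A *ᵥ x with ha
  set b : Fin n → ℝ := B *ᵥ u with hb
  set s : Fin m → ℝ := Bᵀ *ᵥ (P *ᵥ a) with hs
  set c : Fin m → ℝ := M⁻¹ *ᵥ s with hc
  have hMc : M *ᵥ c = s := by
    rw [hc, Matrix.mulVec_mulVec, hMM, Matrix.one_mulVec]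
  have hLx : ((M⁻¹ * Bᵀ * P * A) *ᵥ x) = c := by
    rw [hc, hs, ha, ← Matrix.mulVec_mulVec, ← Matrix.mulVec_mulVec, ← Matrix.mulVec_mulVec]
  -- expand LHS cross terms
  have hbPa : b ⬝ᵥ (P *ᵥ a) = u ⬝ᵥ s := by
    rw [hs, hb]; exact (dotT' B u (P *ᵥ a)).symm
  have haPb : a ⬝ᵥ (P *ᵥ b) = u ⬝ᵥ s := by rw [symdot hPt a b, hbPa]
  have hbPb : b ⬝ᵥ (P *ᵥ b) = u ⬝ᵥ ((Bᵀ * P * B) *ᵥ u) := by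
    have h3 : (Bᵀ * P * B) *ᵥ u = Bᵀ *ᵥ (P *ᵥ (B *ᵥ u)) := by
      simp [← Matrix.mulVec_mulVec]
    rw [h3, dotT' B u, hb]
  have lhs_eq : x ⬝ᵥ (Q *ᵥ x) + u ⬝ᵥ (R *ᵥ u) + (a + b) ⬝ᵥ (P *ᵥ (a + b))
      = x ⬝ᵥ (Q *ᵥ x) + u ⬝ᵥ (R *ᵥ u) + a ⬝ᵥ (P *ᵥ a)
        + 2 * (u ⬝ᵥ s) + u ⬝ᵥ ((Bᵀ * P * B) *ᵥ u) := by
    rw [Matrix.mulVec_add, dotProduct_add, add_dotProduct, add_dotProduct,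
      hbPa, haPb, hbPb]
    ring
  -- expand RHS
  have hPn : x ⬝ᵥ ((Aᵀ * P * A - Aᵀ * P * B * M⁻¹ * Bᵀ * P * A + Q) *ᵥ x)
      = a ⬝ᵥ (P *ᵥ a) - c ⬝ᵥ s + x ⬝ᵥ (Q *ᵥ x) := by
    rw [Matrix.add_mulVec, Matrix.sub_mulVec, dotProduct_add, dotProduct_sub]
    congr 1
    congr 1
    · rw [show Aᵀ * P * A = Aᵀ * (P * A) by rw [Matrix.mul_assoc],
        ← Matrix.mulVec_mulVec, dotT' A x ((P * A) *ᵥ x), ← Matrix.mulVec_mulVec, ← ha]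
    · rw [show Aᵀ * P * B * M⁻¹ * Bᵀ * P * A = Aᵀ * (P * (B * (M⁻¹ * Bᵀ * P * A)))
        by simp only [Matrix.mul_assoc],
        ← Matrix.mulVec_mulVec, dotT' A x _, ← ha, ← Matrix.mulVec_mulVec,
        ← Matrix.mulVec_mulVec,
        show (M⁻¹ * Bᵀ * P * A) = M⁻¹ * Bᵀ * P * A by rfl]
      rw [show ((M⁻¹ * Bᵀ * P * A) *ᵥ x) = c from hLx]
      rw [symdot hPt a (B *ᵥ c), ← dotT' B c (P *ᵥ a), ← hs]
  have hw : (u + c) ⬝ᵥ (M *ᵥ (u + c))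
      = u ⬝ᵥ (M *ᵥ u) + 2 * (u ⬝ᵥ s) + c ⬝ᵥ s := by
    have h2 : c ⬝ᵥ (M *ᵥ u) = u ⬝ᵥ s := by rw [symdot hMt c u, hMc]
    rw [Matrix.mulVec_add, dotProduct_add, add_dotProduct, add_dotProduct, hMc, h2]
    ring
  have hMu : u ⬝ᵥ (M *ᵥ u) = u ⬝ᵥ ((Bᵀ * P * B) *ᵥ u) + u ⬝ᵥ (R *ᵥ u) := by
    rw [hMdef, Matrix.add_mulVec, dotProduct_add]
  rw [lhs_eq, hLx, hPn, hw, hMu]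
  ring
lemma herm_of_t {a : ℕ} {M : Matrix (Fin a) (Fin a) ℝ} (h : Mᵀ = M) : M.IsHermitian := by
  rw [Matrix.IsHermitian, Matrix.conjTranspose_eq_transpose_of_trivial]; exact h

lemma qf_smul {a : ℕ} (c : ℝ) (M : Matrix (Fin a) (Fin a) ℝ) (y : Fin a → ℝ) :
    y ⬝ᵥ ((c • M) *ᵥ y) = c * (y ⬝ᵥ (M *ᵥ y)) := by
  rw [Matrix.smul_mulVec, dotProduct_smul, smul_eq_mul]

lemma smul_posdef {a : ℕ} {c : ℝ} (hc : 0 < c) {R : Matrix (Fin a) (Fin a) ℝ}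
    (hR : R.PosDef) : (c • R).PosDef := by
  refine Matrix.PosDef.of_dotProduct_mulVec_pos (herm_of_t ?_) fun y hy => ?_
  · rw [Matrix.transpose_smul, psd_transpose_eq hR.isHermitian]
  · have h2 := hR.dotProduct_mulVec_pos hy
    simpa [Matrix.smul_mulVec, dotProduct_smul] using mul_pos hc (by simpa using h2)

lemma smul_psd {a : ℕ} {c : ℝ} (hc : 0 ≤ c) {R : Matrix (Fin a) (Fin a) ℝ}
    (hR : R.PosSemidef) : (c • R).PosSemidef := by
  refine Matrix.PosSemidef.of_dotProduct_mulVec_nonneg (herm_of_t ?_) fun y => ?_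
  · rw [Matrix.transpose_smul, psd_transpose_eq hR.isHermitian]
  · have h2 := hR.dotProduct_mulVec_nonneg y
    simpa [Matrix.smul_mulVec, dotProduct_smul] using mul_nonneg hc (by simpa using h2)

lemma loewner_qf {a : ℕ} {X Y : Matrix (Fin a) (Fin a) ℝ} (h : loewnerLE X Y) (y : Fin a → ℝ) :
    y ⬝ᵥ (X *ᵥ y) ≤ y ⬝ᵥ (Y *ᵥ y) := by
  have h2 := psd_nonneg h y
  rw [Matrix.sub_mulVec, dotProduct_sub] at h2
  linarith

variable {n m : ℕ} (A : Matrix (Fin n) (Fin n) ℝ) (B : Matrix (Fin n) (Fin m) ℝ)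

/-- one-step inequality: the Riccati step value is a lower bound of the one-step cost. -/
lemma step_le {P Q : Matrix (Fin n) (Fin n) ℝ} {R : Matrix (Fin m) (Fin m) ℝ}
    (hP : P.PosSemidef) (hR : R.PosDef) (x : Fin n → ℝ) (u : Fin m → ℝ) :
    x ⬝ᵥ ((Aᵀ * P * A - Aᵀ * P * B * (Bᵀ * P * B + R)⁻¹ * Bᵀ * P * A + Q) *ᵥ x)
      ≤ x ⬝ᵥ (Q *ᵥ x) + u ⬝ᵥ (R *ᵥ u) + (A *ᵥ x + B *ᵥ u) ⬝ᵥ (P *ᵥ (A *ᵥ x + B *ᵥ u)) := by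
  rw [completion A B P Q R hP hR x u]
  have := psd_nonneg (M_posdef B hP hR).posSemidef
    (u + ((Bᵀ * P * B + R)⁻¹ * Bᵀ * P * A) *ᵥ x)
  linarith

/-- one-step equality at the minimizer. -/
lemma step_eq {P Q : Matrix (Fin n) (Fin n) ℝ} {R : Matrix (Fin m) (Fin m) ℝ}
    (hP : P.PosSemidef) (hR : R.PosDef) (x : Fin n → ℝ) :
    x ⬝ᵥ ((Aᵀ * P * A - Aᵀ * P * B * (Bᵀ * P * B + R)⁻¹ * Bᵀ * P * A + Q) *ᵥ x)
      = x ⬝ᵥ (Q *ᵥ x)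
        + (-(((Bᵀ * P * B + R)⁻¹ * Bᵀ * P * A) *ᵥ x)) ⬝ᵥ
            (R *ᵥ (-(((Bᵀ * P * B + R)⁻¹ * Bᵀ * P * A) *ᵥ x)))
        + (A *ᵥ x + B *ᵥ (-(((Bᵀ * P * B + R)⁻¹ * Bᵀ * P * A) *ᵥ x))) ⬝ᵥ
            (P *ᵥ (A *ᵥ x + B *ᵥ (-(((Bᵀ * P * B + R)⁻¹ * Bᵀ * P * A) *ᵥ x)))) := by
  rw [completion A B P Q R hP hR x (-(((Bᵀ * P * B + R)⁻¹ * Bᵀ * P * A) *ᵥ x))]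
  simp

lemma riccati_psd {Q : Matrix (Fin n) (Fin n) ℝ} {R : Matrix (Fin m) (Fin m) ℝ}
    (hQ : Q.PosSemidef) (hR : R.PosDef) : ∀ k, (riccati A B Q R k).PosSemidef := by
  intro k
  induction k with
  | zero => exact Matrix.PosSemidef.zero
  | succ k ih =>
      set P := riccati A B Q R k with hPdef
      have hPt : Pᵀ = P := psd_transpose_eq ih.isHermitian
      have hM : (Bᵀ * P * B + R).PosDef := M_posdef B ih hR
      have hMt : (Bᵀ * P * B + R)ᵀ = Bᵀ * P * B + R := psd_transpose_eq hM.isHermitian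
      have hassoc : Bᵀ * (P * B) + R = Bᵀ * P * B + R := by rw [Matrix.mul_assoc]
      have hMinvT : ((Bᵀ * (P * B) + R)⁻¹)ᵀ = (Bᵀ * (P * B) + R)⁻¹ := by
        rw [hassoc, Matrix.transpose_nonsing_inv, hMt]
      have hherm : (riccati A B Q R (k + 1)).IsHermitian := by
        apply herm_of_t
        have hexp : riccati A B Q R (k + 1)
            = Aᵀ * P * A - Aᵀ * P * B * (Bᵀ * P * B + R)⁻¹ * Bᵀ * P * A + Q := rfl
        rw [hexp, Matrix.transpose_add, Matrix.transpose_sub]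
        simp only [Matrix.transpose_mul, Matrix.transpose_transpose, hPt, hMinvT,
          psd_transpose_eq hQ.isHermitian, Matrix.mul_assoc]
      refine Matrix.PosSemidef.of_dotProduct_mulVec_nonneg hherm fun y => ?_
      have he := step_eq A B (Q := Q) ih hR y
      have h1 : 0 ≤ y ⬝ᵥ (Q *ᵥ y) := psd_nonneg hQ y
      have h2 : 0 ≤ (-(((Bᵀ * P * B + R)⁻¹ * Bᵀ * P * A) *ᵥ y)) ⬝ᵥ
          (R *ᵥ (-(((Bᵀ * P * B + R)⁻¹ * Bᵀ * P * A) *ᵥ y))) := psd_nonneg hR.posSemidef _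
      have h3 : 0 ≤ (A *ᵥ y + B *ᵥ (-(((Bᵀ * P * B + R)⁻¹ * Bᵀ * P * A) *ᵥ y))) ⬝ᵥ
          (P *ᵥ (A *ᵥ y + B *ᵥ (-(((Bᵀ * P * B + R)⁻¹ * Bᵀ * P * A) *ᵥ y)))) :=
        psd_nonneg ih _
      have : (0:ℝ) ≤ y ⬝ᵥ (riccati A B Q R (k+1) *ᵥ y) := by
        rw [show riccati A B Q R (k+1)
            = Aᵀ * P * A - Aᵀ * P * B * (Bᵀ * P * B + R)⁻¹ * Bᵀ * P * A + Q from rfl, he]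
        linarith
      simpa using this

/-- Bellman recursion for `riccati` at the minimizer, stated for the successor index. -/
lemma riccati_succ_qf {Q : Matrix (Fin n) (Fin n) ℝ} {R : Matrix (Fin m) (Fin m) ℝ}
    (hQ : Q.PosSemidef) (hR : R.PosDef) (k : ℕ) (y : Fin n → ℝ) :
    y ⬝ᵥ (riccati A B Q R (k + 1) *ᵥ y)
      = y ⬝ᵥ (Q *ᵥ y)
        + (-(((Bᵀ * riccati A B Q R k * B + R)⁻¹ * Bᵀ * riccati A B Q R k * A) *ᵥ y)) ⬝ᵥ
            (R *ᵥ (-(((Bᵀ * riccati A B Q R k * B + R)⁻¹ * Bᵀ * riccati A B Q R k * A) *ᵥ y)))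
        + (A *ᵥ y + B *ᵥ (-(((Bᵀ * riccati A B Q R k * B + R)⁻¹ * Bᵀ * riccati A B Q R k * A) *ᵥ y))) ⬝ᵥ
            (riccati A B Q R k *ᵥ
              (A *ᵥ y + B *ᵥ (-(((Bᵀ * riccati A B Q R k * B + R)⁻¹ * Bᵀ * riccati A B Q R k * A) *ᵥ y)))) :=
  step_eq A B (riccati_psd A B hQ hR k) hR y

lemma riccati_succ_le_qf {Q : Matrix (Fin n) (Fin n) ℝ} {R : Matrix (Fin m) (Fin m) ℝ}
    (hQ : Q.PosSemidef) (hR : R.PosDef) (k : ℕ) (y : Fin n → ℝ) (w : Fin m → ℝ) :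
    y ⬝ᵥ (riccati A B Q R (k + 1) *ᵥ y)
      ≤ y ⬝ᵥ (Q *ᵥ y) + w ⬝ᵥ (R *ᵥ w)
        + (A *ᵥ y + B *ᵥ w) ⬝ᵥ (riccati A B Q R k *ᵥ (A *ᵥ y + B *ᵥ w)) :=
  step_le A B (riccati_psd A B hQ hR k) hR y w

/-- Monotonicity of the Riccati quadratic form in `(Q, R)`. -/
lemma riccati_qf_mono {Q Q' : Matrix (Fin n) (Fin n) ℝ} {R R' : Matrix (Fin m) (Fin m) ℝ}
    (hQ : Q.PosSemidef) (hQ' : Q'.PosSemidef) (hR : R.PosDef) (hR' : R'.PosDef)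
    (hQQ : ∀ y, y ⬝ᵥ (Q *ᵥ y) ≤ y ⬝ᵥ (Q' *ᵥ y))
    (hRR : ∀ w, w ⬝ᵥ (R *ᵥ w) ≤ w ⬝ᵥ (R' *ᵥ w)) :
    ∀ k y, y ⬝ᵥ (riccati A B Q R k *ᵥ y) ≤ y ⬝ᵥ (riccati A B Q' R' k *ᵥ y) := by
  intro k
  induction k with
  | zero => intro y; simp [riccati]
  | succ k ih =>
      intro y
      set w := -(((Bᵀ * riccati A B Q' R' k * B + R')⁻¹ * Bᵀ * riccati A B Q' R' k * A) *ᵥ y)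
        with hwdef
      have he := riccati_succ_qf A B hQ' hR' k y
      rw [← hwdef] at he
      have hle := riccati_succ_le_qf A B hQ hR k y w
      have hy2 := ih (A *ᵥ y + B *ᵥ w)
      have h1 := hQQ y
      have h2 := hRR w
      linarith
/-- Positive homogeneity of the Riccati quadratic form. -/
lemma riccati_qf_smul {Q : Matrix (Fin n) (Fin n) ℝ} {R : Matrix (Fin m) (Fin m) ℝ}
    (hQ : Q.PosSemidef) (hR : R.PosDef) {c : ℝ} (hc : 0 < c) :
    ∀ k y, y ⬝ᵥ (riccati A B (c • Q) (c • R) k *ᵥ y) = c * (y ⬝ᵥ (riccati A B Q R k *ᵥ y)) := by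
  have hQ' : (c • Q).PosSemidef := smul_psd hc.le hQ
  have hR' : (c • R).PosDef := smul_posdef hc hR
  intro k
  induction k with
  | zero => intro y; simp [riccati]
  | succ k ih =>
      intro y
      apply le_antisymm
      · set w := -(((Bᵀ * riccati A B Q R k * B + R)⁻¹ * Bᵀ * riccati A B Q R k * A) *ᵥ y)
          with hwdef
        have he := riccati_succ_qf A B hQ hR k y
        rw [← hwdef] at he
        have hle := riccati_succ_le_qf A B hQ' hR' k y w
        have hy2 := ih (A *ᵥ y + B *ᵥ w)
        rw [qf_smul, qf_smul] at hle
        nlinarith [hle, hy2, he]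
      · set w := -(((Bᵀ * riccati A B (c • Q) (c • R) k * B + c • R)⁻¹ *
            Bᵀ * riccati A B (c • Q) (c • R) k * A) *ᵥ y) with hwdef
        have he := riccati_succ_qf A B hQ' hR' k y
        rw [← hwdef] at he
        have hle := riccati_succ_le_qf A B hQ hR k y w
        have hy2 := ih (A *ᵥ y + B *ᵥ w)
        rw [qf_smul, qf_smul] at he
        nlinarith [hle, hy2, he]

/-- Any admissible trajectory's finite-horizon cost dominates the Riccati value. -/
lemma traj_lb {Q : Matrix (Fin n) (Fin n) ℝ} {R : Matrix (Fin m) (Fin m) ℝ}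
    (hQ : Q.PosSemidef) (hR : R.PosDef) :
    ∀ (k : ℕ) (z : ℕ → Fin n → ℝ) (v : ℕ → Fin m → ℝ),
      (∀ t, z (t + 1) = A *ᵥ z t + B *ᵥ v t) →
      z 0 ⬝ᵥ (riccati A B Q R k *ᵥ z 0)
        ≤ ∑ t ∈ Finset.range k, (z t ⬝ᵥ (Q *ᵥ z t) + v t ⬝ᵥ (R *ᵥ v t)) := by
  intro k
  induction k with
  | zero => intro z v _; simp [riccati]
  | succ k ih =>
      intro z v hd
      rw [Finset.sum_range_succ']
      have h1 := ih (fun t => z (t + 1)) (fun t => v (t + 1)) (fun t => hd (t + 1))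
      have h2 := riccati_succ_le_qf A B hQ hR k (z 0) (v 0)
      rw [← hd 0] at h2
      linarith
end MPCAux

set_option maxHeartbeats 2000000 in
open MPCAux in
/-- ε-efficiency of the MPC policy (eq. (14) in the paper): the total realized MPC cost is
within the factor `1 + ε_T = ρ(1−δ)^{1−T}/(1−γ)` of the cost of any admissible control
sequence with convergent total cost. -/
theorem mpc_eps_efficient {n m : ℕ}
    (A : Matrix (Fin n) (Fin n) ℝ) (B : Matrix (Fin n) (Fin m) ℝ)
    (T : ℕ) (hT : 1 ≤ T) (δ : ℝ) (hδ0 : 0 ≤ δ) (hδ1 : δ < 1)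
    (Q : ℕ → Matrix (Fin n) (Fin n) ℝ) (R : ℕ → Matrix (Fin m) (Fin m) ℝ)
    (hQpd : ∀ t, (Q t).PosDef) (hRpd : ∀ t, (R t).PosDef)
    (hQlow : ∀ t, loewnerLE ((1 - δ) • Q t) (Q (t + 1)))
    (hQhigh : ∀ t, loewnerLE (Q (t + 1)) ((1 + δ) • Q t))
    (hRlow : ∀ t, loewnerLE ((1 - δ) • R t) (R (t + 1)))
    (hRhigh : ∀ t, loewnerLE (R (t + 1)) ((1 + δ) • R t))
    (x : ℕ → Fin n → ℝ) (u : ℕ → Fin m → ℝ)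
    (hu : ∀ t, u t = -(((Bᵀ * riccati A B (Q t) (R t) (T - 1) * B + R t)⁻¹ *
        Bᵀ * riccati A B (Q t) (R t) (T - 1) * A) *ᵥ x t))
    (hx : ∀ t, x (t + 1) = A *ᵥ x t + B *ᵥ u t)
    (ρ : ℝ) (hρ0 : 0 < ρ) (hρ1 : ρ < 1)
    (hρP : ∀ t, loewnerLE (ρ • riccati A B (Q t) (R t) T) (Q t))
    (α : ℝ) (hα : 1 < α)
    (hαP : ∀ t, loewnerLE (riccati A B (Q t) (R t) T)
      (α • riccati A B (Q t) (R t) (T - 1)))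
    (γ : ℝ) (hγ : γ = (1 - ρ) * α / (1 - δ)) (hγ1 : γ < 1) :
    ∀ (z : ℕ → Fin n → ℝ) (v : ℕ → Fin m → ℝ) (S : ℝ),
      z 0 = x 0 →
      (∀ t, z (t + 1) = A *ᵥ z t + B *ᵥ v t) →
      HasSum (fun t : ℕ => z t ⬝ᵥ (Q t *ᵥ z t) + v t ⬝ᵥ (R t *ᵥ v t)) S →
      Summable (fun t : ℕ => x t ⬝ᵥ (Q t *ᵥ x t) + u t ⬝ᵥ (R t *ᵥ u t)) ∧
      ∑' t : ℕ, (x t ⬝ᵥ (Q t *ᵥ x t) + u t ⬝ᵥ (R t *ᵥ u t)) ≤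
        ρ * (1 - δ) ^ (1 - (T : ℤ)) / (1 - γ) * S := by
  intro z v S hz0 hzd hsum
  -- basic scalar facts
  have hδ' : (0:ℝ) < 1 - δ := by linarith
  have hα0 : (0:ℝ) < α := by linarith
  have h1mρ : (0:ℝ) < 1 - ρ := by linarith
  have hγ0 : (0:ℝ) < γ := by rw [hγ]; positivity
  have h1γ : (0:ℝ) < 1 - γ := by linarith
  have hTsucc : T - 1 + 1 = T := Nat.succ_pred_eq_of_pos hT
  -- abbreviations
  set cst : ℕ → ℝ := fun t => x t ⬝ᵥ (Q t *ᵥ x t) + u t ⬝ᵥ (R t *ᵥ u t) with hcstdef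
  set W : ℕ → ℝ := fun t => x t ⬝ᵥ (riccati A B (Q t) (R t) T *ᵥ x t) with hWdef
  set D : ℕ → ℝ := fun t =>
    x (t + 1) ⬝ᵥ (riccati A B (Q t) (R t) (T - 1) *ᵥ x (t + 1)) with hDdef
  clear_value cst W D
  have hpsd : ∀ t k, (riccati A B (Q t) (R t) k).PosSemidef := fun t k =>
    riccati_psd A B (hQpd t).posSemidef (hRpd t) k
  have hWnn : ∀ t, 0 ≤ W t := by
    intro t; simp only [hWdef]; exact psd_nonneg (hpsd t T) _
  have hDnn : ∀ t, 0 ≤ D t := by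
    intro t; simp only [hDdef]; exact psd_nonneg (hpsd t (T - 1)) _
  have hcnn : ∀ t, 0 ≤ cst t := by
    intro t; simp only [hcstdef]
    exact add_nonneg (psd_nonneg (hQpd t).posSemidef _) (psd_nonneg (hRpd t).posSemidef _)
  -- Bellman recursion along the MPC trajectory
  have hbell : ∀ t, W t = cst t + D t := by
    intro t
    have h := riccati_succ_qf A B (hQpd t).posSemidef (hRpd t) (T - 1) (x t)
    rw [hTsucc, ← hu t, ← hx t] at h
    simp only [hWdef, hcstdef, hDdef]
    linarith [h]
  -- lower bound on the stage cost
  have hcostW : ∀ t, ρ * W t ≤ cst t := by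
    intro t
    have h1 := loewner_qf (hρP t) (x t)
    rw [qf_smul] at h1
    have h2 : 0 ≤ u t ⬝ᵥ (R t *ᵥ u t) := psd_nonneg (hRpd t).posSemidef _
    simp only [hcstdef, hWdef]
    linarith
  -- α-based bound
  have hαD : ∀ t, x (t + 1) ⬝ᵥ (riccati A B (Q t) (R t) T *ᵥ x (t + 1)) ≤ α * D t := by
    intro t
    have h1 := loewner_qf (hαP t) (x (t + 1))
    rw [qf_smul] at h1
    simpa only [hDdef] using h1
  -- slow-variation bound
  have hmono : ∀ t, W (t + 1)
      ≤ (1 + δ) * (x (t + 1) ⬝ᵥ (riccati A B (Q t) (R t) T *ᵥ x (t + 1))) := by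
    intro t
    have h1 := riccati_qf_mono A B (hQpd (t + 1)).posSemidef
      (smul_psd (by linarith : (0:ℝ) ≤ 1 + δ) (hQpd t).posSemidef)
      (hRpd (t + 1)) (smul_posdef (by linarith : (0:ℝ) < 1 + δ) (hRpd t))
      (fun y => loewner_qf (hQhigh t) y) (fun w => loewner_qf (hRhigh t) w) T (x (t + 1))
    have h2 := riccati_qf_smul A B (hQpd t).posSemidef (hRpd t)
      (show (0:ℝ) < 1 + δ by linarith) T (x (t + 1))
    rw [h2] at h1
    simpa only [hWdef] using h1
  -- key scalar combinations
  set β : ℝ := (1 - δ) / α with hβdef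
  set K : ℝ := ρ / (1 - γ) with hKdef
  clear_value β K
  have hβγ : β * γ = 1 - ρ := by
    rw [hβdef, hγ]; field_simp
  have hKρ : K * (1 - γ) = ρ := by
    rw [hKdef]; field_simp
  have hγge : 1 - ρ ≤ γ := by
    rw [hγ, le_div_iff₀ hδ']; nlinarith
  have hK1 : (1:ℝ) ≤ K := by
    rw [hKdef, le_div_iff₀ h1γ]; linarith
  have hK0 : (0:ℝ) ≤ K := by linarith
  have hDβ : ∀ t, β * W (t + 1) ≤ D t := by
    intro t
    have h1 := hαD t
    have h2 := hmono t
    have hxPx : 0 ≤ x (t + 1) ⬝ᵥ (riccati A B (Q t) (R t) T *ᵥ x (t + 1)) :=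
      psd_nonneg (hpsd t T) _
    rw [hβdef, div_mul_eq_mul_div, div_le_iff₀ hα0]
    nlinarith [mul_nonneg (mul_nonneg hδ0 hδ0) hxPx,
      mul_le_mul_of_nonneg_left h2 hδ'.le]
  have hWstep : ∀ t, W (t + 1) ≤ γ * W t := by
    intro t
    have h1 := hαD t
    have h2 := hmono t
    have hDle : D t ≤ (1 - ρ) * W t := by
      have hb := hbell t; have hc := hcostW t; linarith
    have hcoef : (1 + δ) * α * (1 - ρ) ≤ γ := by
      rw [hγ, le_div_iff₀ hδ']
      nlinarith [mul_nonneg (mul_nonneg h1mρ.le hα0.le) (mul_nonneg hδ0 hδ0)]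
    have h3 : W (t + 1) ≤ (1 + δ) * (α * D t) := by
      have := mul_le_mul_of_nonneg_left h1 (by linarith : (0:ℝ) ≤ 1 + δ)
      linarith
    have h4 : (1 + δ) * (α * D t) ≤ (1 + δ) * α * ((1 - ρ) * W t) := by
      have := mul_le_mul_of_nonneg_left hDle (by positivity : (0:ℝ) ≤ (1 + δ) * α)
      nlinarith [this]
    have h5 : (1 + δ) * α * ((1 - ρ) * W t) ≤ γ * W t := by
      have := mul_le_mul_of_nonneg_right hcoef (hWnn t)
      nlinarith [this]
    linarith
  have hkey : ∀ t, cst t + K * W (t + 1) ≤ K * W t := by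
    intro t
    have hc1 : cst t ≤ W t - β * W (t + 1) := by
      have hb := hbell t; have hd := hDβ t; linarith
    rcases le_or_gt K β with h | h
    · have e2 : K * W (t + 1) ≤ β * W (t + 1) := mul_le_mul_of_nonneg_right h (hWnn _)
      have e3 : W t ≤ K * W t := by
        calc W t = 1 * W t := (one_mul _).symm
          _ ≤ K * W t := mul_le_mul_of_nonneg_right hK1 (hWnn t)
      linarith
    · have hws := hWstep t
      have e1 : (K - β) * γ = K - 1 := by linear_combination (-1 : ℝ) * hKρ - hβγ
      have e2 : (K - β) * W (t + 1) ≤ (K - β) * (γ * W t) :=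
        mul_le_mul_of_nonneg_left hws (by linarith)
      have e4 : (K - β) * W (t + 1) ≤ (K - 1) * W t := by
        calc (K - β) * W (t + 1) ≤ (K - β) * (γ * W t) := e2
          _ = (K - β) * γ * W t := by ring
          _ = (K - 1) * W t := by rw [e1]
      linarith [hc1, e4]
  -- partial sums of the MPC cost are bounded
  have hsumW : ∀ N, (∑ t ∈ Finset.range N, cst t) + K * W N ≤ K * W 0 := by
    intro N
    induction N with
    | zero => simp
    | succ N ihN =>
        rw [Finset.sum_range_succ]
        have := hkey N
        linarith
  have hbound : ∀ N, ∑ t ∈ Finset.range N, cst t ≤ K * W 0 := by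
    intro N
    have h1 := hsumW N
    have h2 : 0 ≤ K * W N := mul_nonneg hK0 (hWnn N)
    linarith
  have hsummable : Summable cst := summable_of_sum_range_le hcnn hbound
  have htsum : ∑' t, cst t ≤ K * W 0 := Real.tsum_le_of_sum_range_le hcnn hbound
  -- lower bound on S
  have hterm_nonneg : ∀ t, 0 ≤ z t ⬝ᵥ (Q t *ᵥ z t) + v t ⬝ᵥ (R t *ᵥ v t) := fun t =>
    add_nonneg (psd_nonneg (hQpd t).posSemidef _) (psd_nonneg (hRpd t).posSemidef _)
  have hpartial : ∑ t ∈ Finset.range T, (z t ⬝ᵥ (Q t *ᵥ z t) + v t ⬝ᵥ (R t *ᵥ v t)) ≤ S := by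
    have h := Summable.sum_le_tsum (Finset.range T) (fun i _ => hterm_nonneg i) hsum.summable
    rwa [hsum.tsum_eq] at h
  have hQpow : ∀ t (y : Fin n → ℝ), (1 - δ) ^ t * (y ⬝ᵥ (Q 0 *ᵥ y)) ≤ y ⬝ᵥ (Q t *ᵥ y) := by
    intro t
    induction t with
    | zero => intro y; simp
    | succ t iht =>
        intro y
        have h1 := loewner_qf (hQlow t) y
        rw [qf_smul] at h1
        have h2 := iht y
        calc (1 - δ) ^ (t + 1) * (y ⬝ᵥ (Q 0 *ᵥ y))
            = (1 - δ) * ((1 - δ) ^ t * (y ⬝ᵥ (Q 0 *ᵥ y))) := by ring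
          _ ≤ (1 - δ) * (y ⬝ᵥ (Q t *ᵥ y)) := mul_le_mul_of_nonneg_left h2 hδ'.le
          _ ≤ y ⬝ᵥ (Q (t + 1) *ᵥ y) := h1
  have hRpow : ∀ t (w : Fin m → ℝ), (1 - δ) ^ t * (w ⬝ᵥ (R 0 *ᵥ w)) ≤ w ⬝ᵥ (R t *ᵥ w) := by
    intro t
    induction t with
    | zero => intro w; simp
    | succ t iht =>
        intro w
        have h1 := loewner_qf (hRlow t) w
        rw [qf_smul] at h1
        have h2 := iht w
        calc (1 - δ) ^ (t + 1) * (w ⬝ᵥ (R 0 *ᵥ w))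
            = (1 - δ) * ((1 - δ) ^ t * (w ⬝ᵥ (R 0 *ᵥ w))) := by ring
          _ ≤ (1 - δ) * (w ⬝ᵥ (R t *ᵥ w)) := mul_le_mul_of_nonneg_left h2 hδ'.le
          _ ≤ w ⬝ᵥ (R (t + 1) *ᵥ w) := h1
  have hstage : ∀ t, t < T →
      (1 - δ) ^ (T - 1) * (z t ⬝ᵥ (Q 0 *ᵥ z t) + v t ⬝ᵥ (R 0 *ᵥ v t))
        ≤ z t ⬝ᵥ (Q t *ᵥ z t) + v t ⬝ᵥ (R t *ᵥ v t) := by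
    intro t ht
    have hpow : (1 - δ) ^ (T - 1) ≤ (1 - δ) ^ t :=
      pow_le_pow_of_le_one hδ'.le (sub_le_self 1 hδ0) (Nat.le_pred_of_lt ht)
    have hq0 : 0 ≤ z t ⬝ᵥ (Q 0 *ᵥ z t) := psd_nonneg (hQpd 0).posSemidef _
    have hr0 : 0 ≤ v t ⬝ᵥ (R 0 *ᵥ v t) := psd_nonneg (hRpd 0).posSemidef _
    have hq := hQpow t (z t)
    have hr := hRpow t (v t)
    have h1 : (1 - δ) ^ (T - 1) * (z t ⬝ᵥ (Q 0 *ᵥ z t))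
        ≤ (1 - δ) ^ t * (z t ⬝ᵥ (Q 0 *ᵥ z t)) := mul_le_mul_of_nonneg_right hpow hq0
    have h2 : (1 - δ) ^ (T - 1) * (v t ⬝ᵥ (R 0 *ᵥ v t))
        ≤ (1 - δ) ^ t * (v t ⬝ᵥ (R 0 *ᵥ v t)) := mul_le_mul_of_nonneg_right hpow hr0
    linarith [hq, hr, h1, h2]
  have hsum_lb : (1 - δ) ^ (T - 1) *
      (∑ t ∈ Finset.range T, (z t ⬝ᵥ (Q 0 *ᵥ z t) + v t ⬝ᵥ (R 0 *ᵥ v t)))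
        ≤ ∑ t ∈ Finset.range T, (z t ⬝ᵥ (Q t *ᵥ z t) + v t ⬝ᵥ (R t *ᵥ v t)) := by
    rw [Finset.mul_sum]
    exact Finset.sum_le_sum fun i hi => hstage i (Finset.mem_range.1 hi)
  have htraj := traj_lb A B (hQpd 0).posSemidef (hRpd 0) T z v hzd
  rw [hz0] at htraj
  have hSW : (1 - δ) ^ (T - 1) * W 0 ≤ S := by
    have h := mul_le_mul_of_nonneg_left htraj (pow_nonneg hδ'.le (T - 1))
    simp only [hWdef]
    linarith [hsum_lb, hpartial]
  -- assemble
  refine ⟨hsummable, ?_⟩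
  have hE : (0:ℝ) < (1 - δ) ^ (T - 1) := pow_pos hδ' _
  have hW0E : W 0 ≤ S / (1 - δ) ^ (T - 1) := by
    rw [le_div_iff₀ hE]
    nlinarith [hSW]
  have hzpow : (1 - δ : ℝ) ^ (1 - (T : ℤ)) = ((1 - δ : ℝ) ^ (T - 1))⁻¹ := by
    have h1 : (1 : ℤ) - (T : ℤ) = -(((T - 1 : ℕ) : ℤ)) := by
      have : ((T - 1 : ℕ) : ℤ) = (T : ℤ) - 1 := by
        omega
      omega
    rw [h1, _root_.zpow_neg, zpow_natCast]
  calc ∑' t, cst t ≤ K * W 0 := htsum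
    _ ≤ K * (S / (1 - δ) ^ (T - 1)) := mul_le_mul_of_nonneg_left hW0E hK0
    _ = ρ * (1 - δ) ^ (1 - (T : ℤ)) / (1 - γ) * S := by
        rw [hzpow, hKdef]; ring
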